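/- Let $\gamma\ge 2$. Then for all $\rho\ge 0$: $h(\rho)\ge \frac{|\rho-1|^\gamma}{\gamma(\gamma-1)}$; equivalently, $\rho^\gamma-1-\gamma(\rho-1)-|\rho-1|^\gamma\ge 0$ for all $\rho\ge 0$. -/

import Mathlib

noncomputable section

/-- Internal energy `h(ρ) = (ρ^γ - 1 - γ(ρ-1)) / (γ(γ-1))` (real powers). -/
def hfun (γ ρ : ℝ) : ℝ := (ρ ^ γ - 1 - γ * (ρ - 1)) / (γ * (γ - 1))

private lemma rpow_superadd {a b p : ℝ} (ha : 0 ≤ a) (hb : 0 ≤ b) (hp : 1 ≤ p) :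
    a ^ p + b ^ p ≤ (a + b) ^ p := by
  rcases eq_or_lt_of_le (by positivity : (0:ℝ) ≤ a + b) with h | h
  · have ha0 : a = 0 := by linarith [(by positivity : (0:ℝ) ≤ a), (by positivity : (0:ℝ) ≤ b)]
    have hb0 : b = 0 := by linarith
    simp [ha0, hb0, Real.zero_rpow (by linarith : p ≠ 0)]
  · have hp1 : 0 ≤ p - 1 := by linarith
    have h1 : a ^ p ≤ a * (a + b) ^ (p - 1) := by
      calc a ^ p = a * a ^ (p - 1) := by
            rw [← Real.rpow_one_add' ha (by linarith)]; ring_nf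
        _ ≤ a * (a + b) ^ (p - 1) := by
            exact mul_le_mul_of_nonneg_left
              (Real.rpow_le_rpow ha (by linarith) hp1) ha
    have h2 : b ^ p ≤ b * (a + b) ^ (p - 1) := by
      calc b ^ p = b * b ^ (p - 1) := by
            rw [← Real.rpow_one_add' hb (by linarith)]; ring_nf
        _ ≤ b * (a + b) ^ (p - 1) := by
            exact mul_le_mul_of_nonneg_left
              (Real.rpow_le_rpow hb (by linarith) hp1) hb
    have h3 : (a + b) ^ p = (a + b) * (a + b) ^ (p - 1) := by
      rw [← Real.rpow_one_add' (le_of_lt h) (by linarith)]; ring_nf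
    rw [h3]; nlinarith

private lemma hasDerivAt_f (γ : ℝ) (hγ1 : 1 ≤ γ) (x : ℝ) :
    HasDerivAt (fun y : ℝ => y ^ γ - 1 - γ * (y - 1) - (y - 1) ^ γ)
      (γ * x ^ (γ - 1) - γ - γ * (x - 1) ^ (γ - 1)) x := by
  have h1 : HasDerivAt (fun y : ℝ => y ^ γ) (γ * x ^ (γ - 1)) x :=
    Real.hasDerivAt_rpow_const (Or.inr hγ1)
  have hin : HasDerivAt (fun y : ℝ => y - 1) 1 x := (hasDerivAt_id x).sub_const 1
  have h2 : HasDerivAt (fun y : ℝ => (y - 1) ^ γ) (γ * (x - 1) ^ (γ - 1) * 1) x :=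
    by have := (Real.hasDerivAt_rpow_const (x := x - 1) (Or.inr hγ1)).comp x hin; exact this
  have h3 : HasDerivAt (fun y : ℝ => γ * (y - 1)) (γ * 1) x := hin.const_mul γ
  have := ((h1.sub_const 1).sub h3).sub h2
  refine this.congr_deriv ?_
  ring

private lemma hasDerivAt_g (γ : ℝ) (hγ1 : 1 ≤ γ) (x : ℝ) :
    HasDerivAt (fun y : ℝ => y ^ γ - 1 - γ * (y - 1) - (1 - y) ^ γ)
      (γ * x ^ (γ - 1) - γ + γ * (1 - x) ^ (γ - 1)) x := by
  have h1 : HasDerivAt (fun y : ℝ => y ^ γ) (γ * x ^ (γ - 1)) x :=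
    Real.hasDerivAt_rpow_const (Or.inr hγ1)
  have hin : HasDerivAt (fun y : ℝ => 1 - y) (-1) x := by
    simpa using (hasDerivAt_id x).const_sub 1
  have h2 : HasDerivAt (fun y : ℝ => (1 - y) ^ γ) (γ * (1 - x) ^ (γ - 1) * (-1)) x :=
    (Real.hasDerivAt_rpow_const (x := 1 - x) (Or.inr hγ1)).comp x hin
  have h3 : HasDerivAt (fun y : ℝ => γ * (y - 1)) (γ * 1) x :=
    ((hasDerivAt_id x).sub_const 1).const_mul γ
  have := ((h1.sub_const 1).sub h3).sub h2
  refine this.congr_deriv ?_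
  ring

private lemma key_ineq (γ : ℝ) (hγ : 2 ≤ γ) (ρ : ℝ) (hρ : 0 ≤ ρ) :
    ρ ^ γ - 1 - γ * (ρ - 1) - |ρ - 1| ^ γ ≥ 0 := by
  have hγ1 : (1 : ℝ) ≤ γ := by linarith
  have hγ1' : (1 : ℝ) ≤ γ - 1 := by linarith
  rcases le_total ρ 1 with hc | hc
  · -- ρ ∈ [0,1]
    rw [abs_of_nonpos (by linarith), neg_sub]
    set g : ℝ → ℝ := fun y => y ^ γ - 1 - γ * (y - 1) - (1 - y) ^ γ with hg
    have hd : ∀ x : ℝ, HasDerivAt g (γ * x ^ (γ - 1) - γ + γ * (1 - x) ^ (γ - 1)) x :=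
      hasDerivAt_g γ hγ1
    have hanti : AntitoneOn g (Set.Icc 0 1) := by
      apply antitoneOn_of_deriv_nonpos (convex_Icc 0 1)
      · exact fun x _ => (hd x).differentiableAt.continuousAt.continuousWithinAt
      · exact fun x _ => ((hd x).differentiableAt).differentiableWithinAt
      · intro x hx
        rw [interior_Icc] at hx
        rw [(hd x).deriv]
        have hsup : x ^ (γ - 1) + (1 - x) ^ (γ - 1) ≤ (x + (1 - x)) ^ (γ - 1) :=
          rpow_superadd (le_of_lt hx.1) (by linarith [hx.2]) hγ1'
        have : x + (1 - x) = 1 := by ring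
        rw [this, Real.one_rpow] at hsup
        nlinarith [hsup]
    have h10 : g 1 = 0 := by
      simp [hg, Real.one_rpow, Real.zero_rpow (by linarith : γ ≠ 0)]
    have := hanti (Set.mem_Icc.mpr ⟨hρ, hc⟩) (Set.mem_Icc.mpr ⟨zero_le_one, le_refl 1⟩) hc
    rw [h10] at this
    exact this
  · -- ρ ≥ 1
    rw [abs_of_nonneg (by linarith)]
    set f : ℝ → ℝ := fun y => y ^ γ - 1 - γ * (y - 1) - (y - 1) ^ γ with hf
    have hd : ∀ x : ℝ, HasDerivAt f (γ * x ^ (γ - 1) - γ - γ * (x - 1) ^ (γ - 1)) x :=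
      hasDerivAt_f γ hγ1
    have hmono : MonotoneOn f (Set.Ici 1) := by
      apply monotoneOn_of_deriv_nonneg (convex_Ici 1)
      · exact fun x _ => (hd x).differentiableAt.continuousAt.continuousWithinAt
      · exact fun x _ => ((hd x).differentiableAt).differentiableWithinAt
      · intro x hx
        rw [interior_Ici] at hx
        rw [(hd x).deriv]
        have hx1 : (1 : ℝ) < x := hx
        have hsup : (x - 1) ^ (γ - 1) + 1 ^ (γ - 1) ≤ ((x - 1) + 1) ^ (γ - 1) :=
          rpow_superadd (by linarith) zero_le_one hγ1'
        rw [Real.one_rpow] at hsup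
        have : x - 1 + 1 = x := by ring
        rw [this] at hsup
        nlinarith [hsup]
    have h10 : f 1 = 0 := by
      simp [hf, Real.one_rpow, Real.zero_rpow (by linarith : γ ≠ 0)]
    have := hmono (Set.mem_Ici.mpr (le_refl 1)) (Set.mem_Ici.mpr hc) hc
    rw [h10] at this
    exact this

/-- For `γ ≥ 2` and all `ρ ≥ 0`: `h(ρ) ≥ |ρ-1|^γ/(γ(γ-1))`, equivalently
`ρ^γ - 1 - γ(ρ-1) - |ρ-1|^γ ≥ 0`. -/
theorem stmt_6 (γ : ℝ) (hγ : 2 ≤ γ) :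
    ∀ ρ : ℝ, 0 ≤ ρ →
      hfun γ ρ ≥ |ρ - 1| ^ γ / (γ * (γ - 1)) ∧
      ρ ^ γ - 1 - γ * (ρ - 1) - |ρ - 1| ^ γ ≥ 0 := by
  intro ρ hρ
  have key := key_ineq γ hγ ρ hρ
  refine ⟨?_, key⟩
  have hpos : 0 < γ * (γ - 1) := by nlinarith
  rw [hfun, ge_iff_le, div_le_div_iff_of_pos_right hpos]
  linarith
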